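/- For any integer n ≥ 100 and m = ⌈√n⌉: E_{(n₁,…,n_m)∼μ_n^m}[ Σ_{i=1}^m n_i · log₂ n_i ] ≤ (1/2)·n·log₂ n + 4e·n. -/

import Mathlib

set_option maxHeartbeats 1000000

open Finset

/-- Pivot list: p₀ = 1, then the sorted pivots, then p_m = n+1. -/
def pivotList (n : ℕ) (P : Finset ℕ) : List ℕ :=
  1 :: (P.sort (· ≤ ·)) ++ [n + 1]

/-- The i-th gap (bucket size) nᵢ = pᵢ − pᵢ₋₁, for i = 1,…,m. -/
def gap (n : ℕ) (P : Finset ℕ) (i : ℕ) : ℕ :=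
  (pivotList n P).getD i 0 - (pivotList n P).getD (i - 1) 0

/-- Sample space of μ_n^m : all (m−1)-element subsets of {2,…,n}. -/
def pivotSets (n m : ℕ) : Finset (Finset ℕ) :=
  (Finset.Icc 2 n).powersetCard (m - 1)

def cnt (P : Finset ℕ) (x : ℕ) : ℕ := (P.filter (· ≤ x)).card


lemma rank_lemma : ∀ (s : List ℕ), s.Pairwise (· < ·) → ∀ i x, i < s.length →
    (s.getD i 0 ≤ x ↔ i + 1 ≤ (s.filter (· ≤ x)).length) := by
  intro s
  induction s with
  | nil => intro _ i x hi; simp at hi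
  | cons a t ih =>
    intro hs i x hi
    rw [List.pairwise_cons] at hs
    by_cases hax : a ≤ x
    · have hf : (a :: t).filter (· ≤ x) = a :: t.filter (· ≤ x) := by
        simp [List.filter_cons, hax]
      rw [hf]
      cases i with
      | zero => simpa using hax
      | succ j =>
        have := ih hs.2 j x (by simpa using hi)
        simpa [List.getD_cons_succ] using this
    · have hf : (a :: t).filter (· ≤ x) = [] := by
        rw [List.filter_eq_nil_iff]
        intro b hb
        rcases List.mem_cons.1 hb with rfl | hb
        · simpa using hax
        · have := hs.1 b hb; simp; omega
      rw [hf]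
      cases i with
      | zero => simpa using hax
      | succ j =>
        simp only [List.getD_cons_succ]
        constructor
        · intro h
          exfalso
          have hj : j < t.length := by simpa using hi
          have hmem : t.getD j 0 ∈ t := by
            rw [List.getD_eq_getElem _ _ hj]; exact List.getElem_mem _
          have := hs.1 _ hmem
          omega
        · intro h; simp at h

lemma cnt_eq_sort (P : Finset ℕ) (x : ℕ) :
    cnt P x = ((P.sort (· ≤ ·)).filter (· ≤ x)).length := by
  unfold cnt
  rw [Finset.card, Finset.filter_val]
  conv_lhs => rw [← Finset.sort_eq P (· ≤ ·)]
  rw [Multiset.filter_coe]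
  simp

lemma cnt_le (P : Finset ℕ) (x : ℕ) : cnt P x ≤ P.card := Finset.card_filter_le _ _

lemma key (n m : ℕ) (hm : 1 ≤ m) (P : Finset ℕ) (hcard : P.card = m - 1)
    (j : ℕ) (hj : j ≤ m) (x : ℕ) (hx1 : 1 ≤ x) (hxn : x ≤ n) :
    ((pivotList n P).getD j 0 ≤ x ↔ j ≤ cnt P x) := by
  set s := P.sort (· ≤ ·) with hsdef
  have hs : s.length = m - 1 := by rw [hsdef, Finset.length_sort, hcard]
  rcases Nat.eq_zero_or_pos j with rfl | hj1
  · simp [pivotList, List.getD_cons_zero, hx1]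
  · have hplj : (pivotList n P).getD j 0 = (s ++ [n+1]).getD (j-1) 0 := by
      unfold pivotList
      rw [show (1 :: (P.sort (· ≤ ·)) ++ [n + 1] : List ℕ)
          = 1 :: ((P.sort (· ≤ ·)) ++ [n + 1]) from rfl]
      obtain ⟨j', rfl⟩ : ∃ j', j = j' + 1 := ⟨j - 1, by omega⟩
      rw [List.getD_cons_succ]
      simp [hsdef]
    rcases eq_or_lt_of_le hj with rfl | hjm
    · have : (pivotList n P).getD j 0 = n + 1 := by
        rw [hplj, List.getD_append_right _ _ _ _ (by omega)]
        simp [show j - 1 - s.length = 0 by omega]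
      rw [this]
      have h2 := cnt_le P x
      constructor
      · intro h; omega
      · intro h; omega
    · have hjlt : j - 1 < s.length := by omega
      rw [hplj, List.getD_append _ _ _ _ hjlt]
      have hsort : s.Pairwise (· < ·) := List.sortedLT_iff_pairwise.1 (Finset.sortedLT_sort P)
      have := rank_lemma s hsort (j-1) x hjlt
      rw [this, cnt_eq_sort, ← hsdef]
      omega

lemma pivot_bounds (n m : ℕ) (hm : 1 ≤ m) (P : Finset ℕ) (hsub : P ⊆ Finset.Icc 2 n)
    (hcard : P.card = m - 1) (j : ℕ) (hj : j ≤ m) :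
    1 ≤ (pivotList n P).getD j 0 ∧ (pivotList n P).getD j 0 ≤ n + 1 := by
  set s := P.sort (· ≤ ·) with hsdef
  have hs : s.length = m - 1 := by rw [hsdef, Finset.length_sort, hcard]
  rcases Nat.eq_zero_or_pos j with rfl | hj1
  · simp [pivotList, List.getD_cons_zero]
  · have hplj : (pivotList n P).getD j 0 = (s ++ [n+1]).getD (j-1) 0 := by
      unfold pivotList
      obtain ⟨j', rfl⟩ : ∃ j', j = j' + 1 := ⟨j - 1, by omega⟩
      rw [show (1 :: (P.sort (· ≤ ·)) ++ [n + 1] : List ℕ)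
          = 1 :: ((P.sort (· ≤ ·)) ++ [n + 1]) from rfl, List.getD_cons_succ]
      simp [hsdef]
    rcases eq_or_lt_of_le hj with rfl | hjm
    · rw [hplj, List.getD_append_right _ _ _ _ (by omega)]
      simp [show j - 1 - s.length = 0 by omega]
    · have hjlt : j - 1 < s.length := by omega
      rw [hplj, List.getD_append _ _ _ _ hjlt]
      have hmem : s.getD (j-1) 0 ∈ s := by
        rw [List.getD_eq_getElem _ _ hjlt]; exact List.getElem_mem _
      have hmemP : s.getD (j-1) 0 ∈ P := by
        rw [← Finset.mem_sort (· ≤ ·)]; exact hmem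
      have := hsub hmemP
      rw [Finset.mem_Icc] at this
      omega

lemma fiber_eq (n m : ℕ) (hm : 1 ≤ m) (P : Finset ℕ) (hsub : P ⊆ Finset.Icc 2 n)
    (hcard : P.card = m - 1) (i : ℕ) (hi1 : 1 ≤ i) (him : i ≤ m) :
    (Finset.Icc 1 n).filter (fun x => cnt P x = i - 1)
      = Finset.Ico ((pivotList n P).getD (i-1) 0) ((pivotList n P).getD i 0) := by
  ext x
  simp only [Finset.mem_filter, Finset.mem_Icc, Finset.mem_Ico]
  constructor
  · rintro ⟨⟨hx1, hxn⟩, hc⟩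
    have h1 := key n m hm P hcard (i-1) (by omega) x hx1 hxn
    have h2 := key n m hm P hcard i him x hx1 hxn
    constructor
    · exact h1.2 (by omega)
    · by_contra h
      have := h2.1 (by omega)
      omega
  · rintro ⟨hlo, hhi⟩
    have hb1 := pivot_bounds n m hm P hsub hcard (i-1) (by omega)
    have hb2 := pivot_bounds n m hm P hsub hcard i him
    have hx1 : 1 ≤ x := le_trans hb1.1 hlo
    have hxn : x ≤ n := by omega
    have h1 := key n m hm P hcard (i-1) (by omega) x hx1 hxn
    have h2 := key n m hm P hcard i him x hx1 hxn
    have hc1 : i - 1 ≤ cnt P x := h1.1 hlo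
    have hc2 : ¬ i ≤ cnt P x := fun h => by have := h2.2 h; omega
    exact ⟨⟨hx1, hxn⟩, by omega⟩

lemma fiber_card (n m : ℕ) (hm : 1 ≤ m) (P : Finset ℕ) (hsub : P ⊆ Finset.Icc 2 n)
    (hcard : P.card = m - 1) (i : ℕ) (hi1 : 1 ≤ i) (him : i ≤ m) :
    ((Finset.Icc 1 n).filter (fun x => cnt P x = i - 1)).card = gap n P i := by
  rw [fiber_eq n m hm P hsub hcard i hi1 him, Nat.card_Ico, gap]



lemma maps_to (n m : ℕ) (hm : 1 ≤ m) (P : Finset ℕ) (hcard : P.card = m - 1) :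
    ∀ x ∈ Finset.Icc 1 n, cnt P x + 1 ∈ Finset.Icc 1 m := by
  intro x _
  have := cnt_le P x
  rw [hcard] at this
  rw [Finset.mem_Icc]
  omega

lemma filter_succ_eq (n : ℕ) (P : Finset ℕ) (i : ℕ) (hi : 1 ≤ i) :
    (Finset.Icc 1 n).filter (fun x => cnt P x + 1 = i)
      = (Finset.Icc 1 n).filter (fun x => cnt P x = i - 1) := by
  apply Finset.filter_congr
  intro x _
  constructor <;> (intro h; omega)

lemma sum_gap_eq (n m : ℕ) (hm : 1 ≤ m) (P : Finset ℕ) (hsub : P ⊆ Finset.Icc 2 n)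
    (hcard : P.card = m - 1) :
    ∑ i ∈ Finset.Icc 1 m, gap n P i = n := by
  have h := Finset.card_eq_sum_card_fiberwise (maps_to n m hm P hcard)
  rw [Nat.card_Icc] at h
  simp only [Nat.add_sub_cancel] at h
  conv_rhs => rw [h]
  apply Finset.sum_congr rfl
  intro i hi
  rw [Finset.mem_Icc] at hi
  rw [filter_succ_eq n P i hi.1, fiber_card n m hm P hsub hcard i hi.1 hi.2]

lemma sum_gap_sq_eq (n m : ℕ) (hm : 1 ≤ m) (P : Finset ℕ) (hsub : P ⊆ Finset.Icc 2 n)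
    (hcard : P.card = m - 1) :
    ∑ i ∈ Finset.Icc 1 m, gap n P i * gap n P i
      = ∑ x ∈ Finset.Icc 1 n, ∑ y ∈ Finset.Icc 1 n,
          (if cnt P y = cnt P x then 1 else 0) := by
  have hrhs : ∀ x, (∑ y ∈ Finset.Icc 1 n, (if cnt P y = cnt P x then 1 else 0))
      = ((Finset.Icc 1 n).filter (fun y => cnt P y = cnt P x)).card := by
    intro x
    rw [Finset.card_filter]
  simp only [hrhs]
  have h := Finset.sum_fiberwise_of_maps_to (maps_to n m hm P hcard)
      (fun x => ((Finset.Icc 1 n).filter (fun y => cnt P y = cnt P x)).card)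
  rw [← h]
  apply Finset.sum_congr rfl
  intro i hi
  rw [Finset.mem_Icc] at hi
  have hinner : ∀ x ∈ (Finset.Icc 1 n).filter (fun x => cnt P x + 1 = i),
      ((Finset.Icc 1 n).filter (fun y => cnt P y = cnt P x)).card
        = ((Finset.Icc 1 n).filter (fun y => cnt P y = i - 1)).card := by
    intro x hx
    rw [Finset.mem_filter] at hx
    have : cnt P x = i - 1 := by omega
    rw [this]
  rw [Finset.sum_congr rfl hinner, Finset.sum_const, smul_eq_mul,
    filter_succ_eq n P i hi.1, fiber_card n m hm P hsub hcard i hi.1 hi.2]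

lemma cnt_eq_iff (P : Finset ℕ) (x y : ℕ) (hxy : x ≤ y) :
    (cnt P y = cnt P x ↔ P.filter (fun p => x < p ∧ p ≤ y) = ∅) := by
  have hunion : P.filter (· ≤ y)
      = P.filter (· ≤ x) ∪ P.filter (fun p => x < p ∧ p ≤ y) := by
    rw [← Finset.filter_or]
    apply Finset.filter_congr
    intro p _
    constructor
    · intro h; omega
    · intro h; rcases h with h | h <;> omega
  have hdisj : Disjoint (P.filter (· ≤ x)) (P.filter (fun p => x < p ∧ p ≤ y)) := by
    rw [Finset.disjoint_left]
    intro p hp hp2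
    rw [Finset.mem_filter] at hp hp2
    omega
  have hcard : cnt P y = cnt P x + (P.filter (fun p => x < p ∧ p ≤ y)).card := by
    rw [cnt, cnt, hunion, Finset.card_union_of_disjoint hdisj]
  rw [hcard]
  constructor
  · intro h
    rw [← Finset.card_eq_zero]; omega
  · intro h
    rw [h]; simp

lemma ite_cnt_eq (P : Finset ℕ) (x y : ℕ) :
    (if cnt P y = cnt P x then (1:ℕ) else 0)
      = (if P.filter (fun p => min x y < p ∧ p ≤ max x y) = ∅ then 1 else 0) := by
  rcases le_total x y with h | h
  · rw [min_eq_left h, max_eq_right h]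
    simp only [cnt_eq_iff P x y h]
  · rw [min_eq_right h, max_eq_left h]
    have := cnt_eq_iff P y x h
    by_cases hc : cnt P x = cnt P y
    · rw [if_pos hc.symm, if_pos (this.1 hc)]
    · rw [if_neg (fun hh => hc hh.symm), if_neg (fun hh => hc (this.2 hh))]

lemma hockey (K r : ℕ) : ∑ j ∈ Finset.range K, j.choose r = K.choose (r+1) := by
  induction K with
  | zero => simp
  | succ k ih => rw [Finset.sum_range_succ, ih, Nat.choose_succ_succ' k r, Nat.add_comm]

lemma count_empty (n m : ℕ) (a b : ℕ) (ha : 1 ≤ a) (hb : b ≤ n) :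
    ∑ P ∈ pivotSets n m, (if P.filter (fun p => a < p ∧ p ≤ b) = ∅ then 1 else 0)
      = (n - 1 - (b - a)).choose (m - 1) := by
  rw [← Finset.card_filter]
  have hset : (pivotSets n m).filter (fun P => P.filter (fun p => a < p ∧ p ≤ b) = ∅)
      = (Finset.Icc 2 n \ Finset.Ioc a b).powersetCard (m-1) := by
    ext Q
    simp only [Finset.mem_filter, Finset.mem_powersetCard, pivotSets,
      Finset.filter_eq_empty_iff, Finset.subset_sdiff, Finset.disjoint_left,
      Finset.mem_Ioc]
    constructor
    · rintro ⟨⟨hQ1, hQ2⟩, h⟩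
      exact ⟨⟨hQ1, fun p hp hpi => h hp hpi⟩, hQ2⟩
    · rintro ⟨⟨hQ1, h⟩, hQ2⟩
      exact ⟨⟨hQ1, hQ2⟩, fun p hp hpi => h hp hpi⟩
  rw [hset, Finset.card_powersetCard, Finset.card_sdiff_of_subset, Nat.card_Icc, Nat.card_Ioc]
  · congr 2
  · intro p hp
    rw [Finset.mem_Ioc] at hp
    rw [Finset.mem_Icc]
    omega

lemma sum_Icc_choose_le (n m : ℕ) (hm : 1 ≤ m) :
    ∑ d ∈ Finset.Icc 1 (n-1), (n - 1 - d).choose (m - 1) ≤ (n-1).choose m := by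
  have heq : ∑ d ∈ Finset.Icc 1 (n-1), (n - 1 - d).choose (m - 1)
      = ∑ j ∈ Finset.range (n-1), j.choose (m-1) := by
    apply Finset.sum_nbij' (fun d => n - 1 - d) (fun j => n - 1 - j)
    · intro d hd; rw [Finset.mem_Icc] at hd; rw [Finset.mem_range]; omega
    · intro j hj; rw [Finset.mem_range] at hj; rw [Finset.mem_Icc]; omega
    · intro d hd; rw [Finset.mem_Icc] at hd; omega
    · intro j hj; rw [Finset.mem_range] at hj; omega
    · intro d hd; rfl
  rw [heq, hockey]
  rw [show m - 1 + 1 = m by omega]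

lemma inner_sum_le (n m : ℕ) (hm : 1 ≤ m) (x : ℕ) (hx1 : 1 ≤ x) (hxn : x ≤ n) :
    ∑ y ∈ Finset.Icc 1 n, (n - 1 - (max x y - min x y)).choose (m - 1)
      ≤ (n-1).choose (m-1) + 2 * (n-1).choose m := by
  have hsplit : Finset.Icc 1 n = Finset.Ico 1 x ∪ Finset.Icc x n := by
    ext y; simp only [Finset.mem_Icc, Finset.mem_union, Finset.mem_Ico]; omega
  have hdisj : Disjoint (Finset.Ico 1 x) (Finset.Icc x n) := by
    rw [Finset.disjoint_left]
    intro y hy hy2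
    rw [Finset.mem_Ico] at hy; rw [Finset.mem_Icc] at hy2; omega
  rw [hsplit, Finset.sum_union hdisj, ← Finset.Ioc_insert_left hxn,
    Finset.sum_insert (by simp)]
  have h1 : ∑ y ∈ Finset.Ico 1 x, (n - 1 - (max x y - min x y)).choose (m - 1)
      ≤ (n-1).choose m := by
    have heq : ∑ y ∈ Finset.Ico 1 x, (n - 1 - (max x y - min x y)).choose (m - 1)
        = ∑ d ∈ Finset.Icc 1 (x-1), (n - 1 - d).choose (m - 1) := by
      apply Finset.sum_nbij' (fun y => x - y) (fun d => x - d)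
      · intro y hy; rw [Finset.mem_Ico] at hy; rw [Finset.mem_Icc]; omega
      · intro d hd; rw [Finset.mem_Icc] at hd; rw [Finset.mem_Ico]; omega
      · intro y hy; rw [Finset.mem_Ico] at hy; omega
      · intro d hd; rw [Finset.mem_Icc] at hd; omega
      · intro y hy; rw [Finset.mem_Ico] at hy
        congr 2
        rw [max_eq_left (by omega), min_eq_right (by omega)]
    rw [heq]
    calc ∑ d ∈ Finset.Icc 1 (x-1), (n - 1 - d).choose (m - 1)
        ≤ ∑ d ∈ Finset.Icc 1 (n-1), (n - 1 - d).choose (m - 1) := by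
          apply Finset.sum_le_sum_of_subset
          apply Finset.Icc_subset_Icc_right; omega
      _ ≤ (n-1).choose m := sum_Icc_choose_le n m hm
  have h2 : ∑ y ∈ Finset.Ioc x n, (n - 1 - (max x y - min x y)).choose (m - 1)
      ≤ (n-1).choose m := by
    have heq : ∑ y ∈ Finset.Ioc x n, (n - 1 - (max x y - min x y)).choose (m - 1)
        = ∑ d ∈ Finset.Icc 1 (n-x), (n - 1 - d).choose (m - 1) := by
      apply Finset.sum_nbij' (fun y => y - x) (fun d => x + d)
      · intro y hy; rw [Finset.mem_Ioc] at hy; rw [Finset.mem_Icc]; omega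
      · intro d hd; rw [Finset.mem_Icc] at hd; rw [Finset.mem_Ioc]; omega
      · intro y hy; rw [Finset.mem_Ioc] at hy; omega
      · intro d hd; rw [Finset.mem_Icc] at hd; omega
      · intro y hy; rw [Finset.mem_Ioc] at hy
        congr 2
        rw [max_eq_right (by omega), min_eq_left (by omega)]
    rw [heq]
    calc ∑ d ∈ Finset.Icc 1 (n-x), (n - 1 - d).choose (m - 1)
        ≤ ∑ d ∈ Finset.Icc 1 (n-1), (n - 1 - d).choose (m - 1) := by
          apply Finset.sum_le_sum_of_subset
          apply Finset.Icc_subset_Icc_right; omega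
      _ ≤ (n-1).choose m := sum_Icc_choose_le n m hm
  have hx : (n - 1 - (max x x - min x x)).choose (m - 1) = (n-1).choose (m-1) := by
    simp
  omega

lemma total_sum_le (n m : ℕ) (hm : 1 ≤ m) :
    ∑ P ∈ pivotSets n m, ∑ i ∈ Finset.Icc 1 m, gap n P i * gap n P i
      ≤ n * ((n-1).choose (m-1) + 2 * (n-1).choose m) := by
  have step1 : ∑ P ∈ pivotSets n m, ∑ i ∈ Finset.Icc 1 m, gap n P i * gap n P i
      = ∑ x ∈ Finset.Icc 1 n, ∑ y ∈ Finset.Icc 1 n, ∑ P ∈ pivotSets n m,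
          (if P.filter (fun p => min x y < p ∧ p ≤ max x y) = ∅ then 1 else 0) := by
    have h1 : ∀ P ∈ pivotSets n m, ∑ i ∈ Finset.Icc 1 m, gap n P i * gap n P i
        = ∑ x ∈ Finset.Icc 1 n, ∑ y ∈ Finset.Icc 1 n,
            (if P.filter (fun p => min x y < p ∧ p ≤ max x y) = ∅ then 1 else 0) := by
      intro P hP
      rw [pivotSets, Finset.mem_powersetCard] at hP
      rw [sum_gap_sq_eq n m hm P hP.1 hP.2]
      exact Finset.sum_congr rfl fun x _ => Finset.sum_congr rfl fun y _ => ite_cnt_eq P x y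
    rw [Finset.sum_congr rfl h1, Finset.sum_comm]
    exact Finset.sum_congr rfl fun x _ => Finset.sum_comm
  rw [step1]
  have step2 : ∀ x ∈ Finset.Icc 1 n,
      ∑ y ∈ Finset.Icc 1 n, ∑ P ∈ pivotSets n m,
          (if P.filter (fun p => min x y < p ∧ p ≤ max x y) = ∅ then 1 else 0)
        ≤ (n-1).choose (m-1) + 2 * (n-1).choose m := by
    intro x hx
    rw [Finset.mem_Icc] at hx
    have : ∀ y ∈ Finset.Icc 1 n, ∑ P ∈ pivotSets n m,
        (if P.filter (fun p => min x y < p ∧ p ≤ max x y) = ∅ then 1 else 0)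
          = (n - 1 - (max x y - min x y)).choose (m - 1) := by
      intro y hy
      rw [Finset.mem_Icc] at hy
      exact count_empty n m (min x y) (max x y) (by omega) (by omega)
    rw [Finset.sum_congr rfl this]
    exact inner_sum_le n m hm x hx.1 hx.2
  calc ∑ x ∈ Finset.Icc 1 n, ∑ y ∈ Finset.Icc 1 n, ∑ P ∈ pivotSets n m,
          (if P.filter (fun p => min x y < p ∧ p ≤ max x y) = ∅ then 1 else 0)
      ≤ ∑ _x ∈ Finset.Icc 1 n, ((n-1).choose (m-1) + 2 * (n-1).choose m) :=
        Finset.sum_le_sum step2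
    _ = n * ((n-1).choose (m-1) + 2 * (n-1).choose m) := by
        rw [Finset.sum_const, Nat.card_Icc, smul_eq_mul]
        congr 1

lemma log_bound (n g : ℕ) (hn : 1 ≤ n) :
    (g:ℝ) * Real.logb 2 g
      ≤ g * ((1/2) * Real.logb 2 n) + (g:ℝ) * g / (Real.sqrt n * Real.log 2) := by
  have hl2 : (0:ℝ) < Real.log 2 := Real.log_pos (by norm_num)
  have hsn : (0:ℝ) < Real.sqrt n := Real.sqrt_pos.2 (by positivity)
  rcases Nat.eq_zero_or_pos g with rfl | hg
  · simp
  · have hgpos : (0:ℝ) < g := by exact_mod_cast hg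
    have key : Real.log g ≤ (1/2) * Real.log n + g / Real.sqrt n := by
      have h1 : Real.log ((g:ℝ) / Real.sqrt n) ≤ (g:ℝ) / Real.sqrt n - 1 :=
        Real.log_le_sub_one_of_pos (by positivity)
      have h2 : Real.log ((g:ℝ) / Real.sqrt n)
          = Real.log g - (1/2) * Real.log n := by
        rw [Real.log_div (ne_of_gt hgpos) (ne_of_gt hsn), Real.log_sqrt (by positivity)]
        ring
      rw [h2] at h1
      linarith
    rw [Real.logb, Real.logb]
    rw [show (g:ℝ) * (Real.log g / Real.log 2) = (g * Real.log g) / Real.log 2 by ring,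
      show (g:ℝ) * (1/2 * (Real.log n / Real.log 2)) + (g:ℝ)*g/(Real.sqrt n * Real.log 2)
        = (g * ((1/2) * Real.log n) + g*g/Real.sqrt n) / Real.log 2 by field_simp]
    gcongr
    have h3 := mul_le_mul_of_nonneg_left key (le_of_lt hgpos)
    have h4 : (g:ℝ) * ((g:ℝ)/Real.sqrt n) = (g:ℝ)*g/Real.sqrt n := by ring
    nlinarith

lemma perP (n m : ℕ) (hn : 1 ≤ n) (hm : 1 ≤ m) (P : Finset ℕ)
    (hsub : P ⊆ Finset.Icc 2 n) (hcard : P.card = m - 1) :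
    ∑ i ∈ Finset.Icc 1 m, (gap n P i : ℝ) * Real.logb 2 (gap n P i)
      ≤ (n:ℝ) * ((1/2) * Real.logb 2 n)
        + ((∑ i ∈ Finset.Icc 1 m, gap n P i * gap n P i : ℕ) : ℝ)
            / (Real.sqrt n * Real.log 2) := by
  calc ∑ i ∈ Finset.Icc 1 m, (gap n P i : ℝ) * Real.logb 2 (gap n P i)
      ≤ ∑ i ∈ Finset.Icc 1 m, ((gap n P i : ℝ) * ((1/2) * Real.logb 2 n)
          + (gap n P i : ℝ) * (gap n P i) / (Real.sqrt n * Real.log 2)) :=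
        Finset.sum_le_sum fun i _ => log_bound n (gap n P i) hn
    _ = (∑ i ∈ Finset.Icc 1 m, (gap n P i : ℝ)) * ((1/2) * Real.logb 2 n)
          + (∑ i ∈ Finset.Icc 1 m, (gap n P i : ℝ) * (gap n P i))
              / (Real.sqrt n * Real.log 2) := by
        rw [Finset.sum_add_distrib, Finset.sum_mul, Finset.sum_div]
    _ = (n:ℝ) * ((1/2) * Real.logb 2 n)
          + ((∑ i ∈ Finset.Icc 1 m, gap n P i * gap n P i : ℕ) : ℝ)
              / (Real.sqrt n * Real.log 2) := by
        congr 1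
        · congr 1
          rw [← Nat.cast_sum, sum_gap_eq n m hm P hsub hcard]
        · congr 1
          rw [Nat.cast_sum]
          exact Finset.sum_congr rfl fun i _ => by push_cast; ring

theorem stmt_4 (n : ℕ) (hn : 100 ≤ n) (m : ℕ) (hm : m = ⌈Real.sqrt n⌉₊) :
    (∑ P ∈ pivotSets n m, ∑ i ∈ Finset.Icc 1 m,
        (gap n P i : ℝ) * Real.logb 2 (gap n P i)) / (pivotSets n m).card
      ≤ (1 / 2) * n * Real.logb 2 n + 4 * Real.exp 1 * n := by
  have hn1 : (1:ℕ) ≤ n := by omega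
  have hnR : (1:ℝ) ≤ n := by exact_mod_cast hn1
  have hsq1 : (1:ℝ) ≤ Real.sqrt n := Real.one_le_sqrt.2 hnR
  have hsqn : Real.sqrt n * Real.sqrt n = n :=
    Real.mul_self_sqrt (by positivity)
  have hm1 : 1 ≤ m := by
    rw [hm]
    have : (0:ℝ) < Real.sqrt n := by linarith
    exact Nat.ceil_pos.2 this
  have hsqm : Real.sqrt n ≤ (m:ℝ) := by rw [hm]; exact Nat.le_ceil _
  have hmn : m ≤ n := by
    rw [hm, Nat.ceil_le]
    calc Real.sqrt n ≤ Real.sqrt ((n:ℝ)^2) := Real.sqrt_le_sqrt (by nlinarith)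
      _ = n := Real.sqrt_sq (by positivity)
  have hcardPS : (pivotSets n m).card = (n-1).choose (m-1) := by
    rw [pivotSets, Finset.card_powersetCard, Nat.card_Icc,
      show n + 1 - 2 = n - 1 by omega]
  have hNpos : 0 < (pivotSets n m).card := by
    rw [hcardPS]; exact Nat.choose_pos (by omega)
  set N := (pivotSets n m).card with hN
  clear_value N
  have hNR : (0:ℝ) < (N:ℝ) := by exact_mod_cast hNpos
  rw [div_le_iff₀ hNR]
  have hl2 : (0:ℝ) < Real.log 2 := Real.log_pos (by norm_num)
  have hc : (0:ℝ) < Real.sqrt n * Real.log 2 := by positivity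
  set L := Real.logb 2 n with hL
  clear_value L
  set C2 := (n-1).choose m with hC2
  clear_value C2
  -- step 1: sum over P of per-P bounds
  have hsum : ∑ P ∈ pivotSets n m, ∑ i ∈ Finset.Icc 1 m,
        (gap n P i : ℝ) * Real.logb 2 (gap n P i)
      ≤ (N:ℝ) * ((n:ℝ) * ((1/2) * L))
        + ((∑ P ∈ pivotSets n m, ∑ i ∈ Finset.Icc 1 m, gap n P i * gap n P i : ℕ) : ℝ)
            / (Real.sqrt n * Real.log 2) := by
    calc ∑ P ∈ pivotSets n m, ∑ i ∈ Finset.Icc 1 m,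
          (gap n P i : ℝ) * Real.logb 2 (gap n P i)
        ≤ ∑ P ∈ pivotSets n m, ((n:ℝ) * ((1/2) * L)
            + ((∑ i ∈ Finset.Icc 1 m, gap n P i * gap n P i : ℕ) : ℝ)
                / (Real.sqrt n * Real.log 2)) := by
          apply Finset.sum_le_sum
          intro P hP
          rw [pivotSets, Finset.mem_powersetCard] at hP
          rw [hL]
          exact perP n m hn1 hm1 P hP.1 hP.2
      _ = (N:ℝ) * ((n:ℝ) * ((1/2) * L))
            + ((∑ P ∈ pivotSets n m, ∑ i ∈ Finset.Icc 1 m, gap n P i * gap n P i : ℕ) : ℝ)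
                / (Real.sqrt n * Real.log 2) := by
          rw [Finset.sum_add_distrib, Finset.sum_const, nsmul_eq_mul, ← Finset.sum_div,
            Nat.cast_sum, ← hN]
  -- step 2: bound the double sum
  have hT : ((∑ P ∈ pivotSets n m, ∑ i ∈ Finset.Icc 1 m, gap n P i * gap n P i : ℕ) : ℝ)
      ≤ (n:ℝ) * ((N:ℝ) + 2 * (C2:ℝ)) := by
    have := total_sum_le n m hm1
    have hcast : ((∑ P ∈ pivotSets n m, ∑ i ∈ Finset.Icc 1 m, gap n P i * gap n P i : ℕ) : ℝ)
        ≤ ((n * ((n-1).choose (m-1) + 2 * (n-1).choose m) : ℕ) : ℝ) := by exact_mod_cast this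
    calc _ ≤ ((n * ((n-1).choose (m-1) + 2 * (n-1).choose m) : ℕ) : ℝ) := hcast
      _ = (n:ℝ) * ((N:ℝ) + 2 * (C2:ℝ)) := by push_cast [hcardPS, hC2]; ring
  -- step 3: combinatorial fact C2 * m ≤ N * n
  have hC2m : (C2:ℝ) * (m:ℝ) ≤ (N:ℝ) * (n:ℝ) := by
    have h1 : (n-1).choose m * m = (n-1).choose (m-1) * (n - 1 - (m-1)) := by
      have := Nat.choose_succ_right_eq (n-1) (m-1)
      rw [show m - 1 + 1 = m by omega] at this
      exact this
    have h2 : (n-1).choose m * m ≤ (n-1).choose (m-1) * n := by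
      rw [h1]
      exact Nat.mul_le_mul_left _ (by omega)
    calc (C2:ℝ) * (m:ℝ) = (((n-1).choose m * m : ℕ) : ℝ) := by push_cast [hC2]; ring
      _ ≤ (((n-1).choose (m-1) * n : ℕ) : ℝ) := by exact_mod_cast h2
      _ = (N:ℝ) * (n:ℝ) := by push_cast [hcardPS]; ring
  have hC2N : (C2:ℝ) ≤ (N:ℝ) * Real.sqrt n := by
    have hmR : (0:ℝ) < (m:ℝ) := by exact_mod_cast hm1
    have h3 : (C2:ℝ) * Real.sqrt n ≤ (C2:ℝ) * m := by
      apply mul_le_mul_of_nonneg_left hsqm (by positivity)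
    have h4 : (C2:ℝ) * Real.sqrt n ≤ (N:ℝ) * (Real.sqrt n * Real.sqrt n) := by
      rw [hsqn]; linarith
    have hpos : (0:ℝ) < Real.sqrt n := lt_of_lt_of_le one_pos hsq1
    apply le_of_mul_le_mul_right _ hpos
    rw [mul_assoc]
    exact h4
  -- final arithmetic
  have he : (2.7182818283:ℝ) < Real.exp 1 := Real.exp_one_gt_d9
  have hl2' : (0.6931471803:ℝ) < Real.log 2 := Real.log_two_gt_d9
  have hfinal : (n:ℝ) * ((N:ℝ) + 2 * (C2:ℝ)) / (Real.sqrt n * Real.log 2)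
      ≤ 4 * Real.exp 1 * n * N := by
    rw [div_le_iff₀ hc]
    have hnn : (0:ℝ) < n := by linarith
    have k1 : (n:ℝ) * (2*(C2:ℝ)) ≤ 2*(n:ℝ)*((N:ℝ)*Real.sqrt n) := by nlinarith [hC2N]
    have k2 : (n:ℝ)*(N:ℝ) ≤ (n:ℝ)*(N:ℝ)*Real.sqrt n := by nlinarith [mul_pos hnn hNR]
    have k3 : 3*((n:ℝ)*(N:ℝ)*Real.sqrt n) ≤ 4*Real.exp 1*((n:ℝ)*(N:ℝ)*Real.sqrt n)*Real.log 2 := by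
      have hpos : (0:ℝ) < (n:ℝ)*(N:ℝ)*Real.sqrt n := by positivity
      have h34 : (3:ℝ) ≤ 4*Real.exp 1*Real.log 2 := by nlinarith [he, hl2']
      nlinarith [mul_le_mul_of_nonneg_right h34 hpos.le]
    linarith [k1, k2, k3]
  calc ∑ P ∈ pivotSets n m, ∑ i ∈ Finset.Icc 1 m,
        (gap n P i : ℝ) * Real.logb 2 (gap n P i)
      ≤ (N:ℝ) * ((n:ℝ) * ((1/2) * L)) + (n:ℝ) * ((N:ℝ) + 2 * (C2:ℝ)) / (Real.sqrt n * Real.log 2) := by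
        apply le_trans hsum
        apply add_le_add_right
        exact (div_le_div_iff_of_pos_right hc).2 hT
    _ ≤ ((1 / 2) * n * L + 4 * Real.exp 1 * n) * N := by nlinarith [hfinal]
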